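/- arXiv:2110.12219 — 3 statements merged into one kernel-verified Lean document; each statement's English description precedes it below -/
import Mathlib

section
/- Let m ≥ 1 and let a = (a_1,…,a_m), b = (b_1,…,b_m) be complex vectors and z ∈ ℂ such that sin(π(a_j − a_k)) ≠ 0 for all j ≠ k and sin(π(z − a_k)) ≠ 0 for all k. Then for each choice of sign ε ∈ {+1, −1}: ∑_{k=1}^{m} [ (∏_{j=1}^{m} sin(π(b_j − a_k))) / (∏_{j≠k} sin(π(a_j − a_k))) ] · e^{ε·iπ(z − a_k)} / sin(π(z − a_k)) = e^{ε·iπψ} − (∏_{j=1}^{m} sin(π(z − b_j))) / (∏_{j=1}^{m} sin(π(z − a_j))), where ψ = ∑_{j=1}^{m} (b_j − a_j). -/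
open Finset Polynomial

lemma core_lagrange {m : ℕ} (x : Fin m → ℂ) (hx : Function.Injective x) (w : ℂ)
    (hw : ∀ k, w ≠ x k) (f : ℂ[X]) (hf : f.degree < m) :
    ∑ k : Fin m, f.eval (x k) * ((∏ j ∈ univ.erase k, (x k - x j))⁻¹ * (w - x k)⁻¹)
      = f.eval w / ∏ j, (w - x j) := by
  have hinj : Set.InjOn x (univ : Finset (Fin m)) := hx.injOn
  have h1 : f = Lagrange.interpolate univ x (fun k => f.eval (x k)) :=
    Lagrange.eq_interpolate hinj (by simpa using hf)
  have h2 := Lagrange.eval_interpolate_not_at_node (x := w) (s := univ) (v := x)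
      (fun k => f.eval (x k)) (fun i _ => hw i)
  rw [← h1] at h2
  have hprod : (∏ j, (w - x j)) ≠ 0 :=
    prod_ne_zero_iff.2 fun j _ => sub_ne_zero_of_ne (hw j)
  rw [eq_div_iff hprod, h2, Lagrange.eval_nodal]
  rw [mul_comm]
  congr 1
  refine Finset.sum_congr rfl fun k _ => ?_
  rw [Lagrange.nodalWeight, ← Finset.prod_inv_distrib]
  ring

lemma sign_flip {m : ℕ} (s : Finset (Fin m)) (g : Fin m → ℂ) :
    ∏ j ∈ s, (g j) = (-1)^(#s) * ∏ j ∈ s, (-(g j)) := by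
  rw [← Finset.prod_const, ← Finset.prod_mul_distrib]; simp

lemma alg2 {m : ℕ} (α β : Fin m → ℂ) (w : ℂ) (hαinj : Function.Injective α)
    (hw : ∀ k, w ≠ α k) :
    ∑ k : Fin m, (∏ j, (β j - α k)) * ((∏ j ∈ univ.erase k, (α j - α k))⁻¹ * (w - α k)⁻¹)
      = 1 - (∏ j, (w - β j)) / (∏ j, (w - α j)) := by
  set P : ℂ[X] := ∏ j, (X - C (β j)) with hP
  set Q : ℂ[X] := ∏ j, (X - C (α j)) with hQ
  have hPm : P.Monic := monic_prod_of_monic _ _ fun j _ => monic_X_sub_C _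
  have hQm : Q.Monic := monic_prod_of_monic _ _ fun j _ => monic_X_sub_C _
  have hPd : P.degree = m := by
    rw [hP, degree_prod]; simp [degree_X_sub_C]
  have hQd : Q.degree = m := by
    rw [hQ, degree_prod]; simp [degree_X_sub_C]
  have hf : (P - Q).degree < m := by
    rw [← hPd]
    exact degree_sub_lt (hPd.trans hQd.symm) hPm.ne_zero (by rw [hPm.leadingCoeff, hQm.leadingCoeff])
  have hevP : ∀ t : ℂ, P.eval t = ∏ j, (t - β j) := by intro t; simp [hP, eval_prod]
  have hevQ : ∀ t : ℂ, Q.eval t = ∏ j, (t - α j) := by intro t; simp [hQ, eval_prod]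
  have hQ0 : ∀ k, Q.eval (α k) = 0 := by
    intro k; rw [hevQ]; exact Finset.prod_eq_zero (mem_univ k) (by ring)
  have hcore := core_lagrange α hαinj w hw (P - Q) hf
  have hprod : (∏ j, (w - α j)) ≠ 0 :=
    prod_ne_zero_iff.2 fun j _ => sub_ne_zero_of_ne (hw j)
  have hL : ∑ k : Fin m, (∏ j, (β j - α k)) * ((∏ j ∈ univ.erase k, (α j - α k))⁻¹ * (w - α k)⁻¹)
      = -∑ k : Fin m, (P - Q).eval (α k) * ((∏ j ∈ univ.erase k, (α k - α j))⁻¹ * (w - α k)⁻¹) := by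
    rw [← Finset.sum_neg_distrib]
    refine Finset.sum_congr rfl fun k _ => ?_
    have e1 : (∏ j, (β j - α k)) = (-1)^(#(univ : Finset (Fin m))) * ∏ j, (α k - β j) := by
      rw [sign_flip univ (fun j => β j - α k)]; congr 1; apply Finset.prod_congr rfl; intros; ring
    have e2 : (∏ j ∈ univ.erase k, (α j - α k))
        = (-1)^(#(univ.erase k)) * ∏ j ∈ univ.erase k, (α k - α j) := by
      rw [sign_flip (univ.erase k) (fun j => α j - α k)]; congr 1
      apply Finset.prod_congr rfl; intros; ring
    have hcard : #(univ.erase k) + 1 = #(univ : Finset (Fin m)) :=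
      Finset.card_erase_add_one (mem_univ k)
    have hev : (P - Q).eval (α k) = ∏ j, (α k - β j) := by
      rw [eval_sub, hQ0, hevP, sub_zero]
    rw [e1, e2, hev, ← hcard, pow_succ]
    have hne : ((-1 : ℂ))^(#(univ.erase k)) ≠ 0 := pow_ne_zero _ (by norm_num)
    rw [mul_inv]
    linear_combination (-(∏ j, (α k - β j)) * (∏ j ∈ univ.erase k, (α k - α j))⁻¹ *
      (w - α k)⁻¹) * (mul_inv_cancel₀ hne)
  rw [hL, hcore, eval_sub, hevP, hevQ]
  field_simp
  ring

lemma alg1 {m : ℕ} (α β : Fin m → ℂ) (w : ℂ) (hαinj : Function.Injective α)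
    (hα0 : ∀ k, α k ≠ 0) (hw0 : w ≠ 0) (hw : ∀ k, w ≠ α k) :
    ∑ k : Fin m, (∏ j, (β j - α k)) *
        ((∏ j ∈ univ.erase k, (α j - α k))⁻¹ * (w * (α k)⁻¹ * (w - α k)⁻¹))
      = (∏ j, β j) / (∏ j, α j) - (∏ j, (w - β j)) / (∏ j, (w - α j)) := by
  have hprodα : (∏ j, α j) ≠ 0 := prod_ne_zero_iff.2 fun j _ => hα0 j
  have hprod : (∏ j, (w - α j)) ≠ 0 :=
    prod_ne_zero_iff.2 fun j _ => sub_ne_zero_of_ne (hw j)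
  set c : ℂ := (∏ j, β j) / (∏ j, α j) with hc
  set P : ℂ[X] := ∏ j, (X - C (β j)) with hP
  set Q : ℂ[X] := ∏ j, (X - C (α j)) with hQ
  have hPd : P.degree = m := by rw [hP, degree_prod]; simp [degree_X_sub_C]
  have hQd : Q.degree = m := by rw [hQ, degree_prod]; simp [degree_X_sub_C]
  have hevP : ∀ t : ℂ, P.eval t = ∏ j, (t - β j) := by intro t; simp [hP, eval_prod]
  have hevQ : ∀ t : ℂ, Q.eval t = ∏ j, (t - α j) := by intro t; simp [hQ, eval_prod]
  have hQ0 : ∀ k, Q.eval (α k) = 0 := by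
    intro k; rw [hevQ]; exact Finset.prod_eq_zero (mem_univ k) (by ring)
  set f : ℂ[X] := P - C c * Q with hfdef
  have hf0 : f.eval 0 = 0 := by
    rw [hfdef, eval_sub, eval_mul, eval_C, hevP, hevQ]
    have e1 : (∏ j : Fin m, ((0:ℂ) - β j)) = (-1)^(#(univ : Finset (Fin m))) * ∏ j, β j := by
      rw [sign_flip univ (fun j => (0:ℂ) - β j)]; congr 1
      apply Finset.prod_congr rfl; intros; ring
    have e2 : (∏ j : Fin m, ((0:ℂ) - α j)) = (-1)^(#(univ : Finset (Fin m))) * ∏ j, α j := by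
      rw [sign_flip univ (fun j => (0:ℂ) - α j)]; congr 1
      apply Finset.prod_congr rfl; intros; ring
    rw [e1, e2, hc]
    field_simp
    ring
  obtain ⟨g, hg⟩ : X ∣ f := X_dvd_iff.2 (by rwa [coeff_zero_eq_eval_zero])
  have hfd : f.degree ≤ m := by
    refine le_trans (degree_sub_le _ _) (max_le (le_of_eq hPd) ?_)
    refine le_trans (degree_mul_le _ _) ?_
    calc (C c).degree + Q.degree ≤ 0 + (m : WithBot ℕ) :=
          add_le_add degree_C_le (le_of_eq hQd)
      _ = m := by rw [zero_add]
  have hgdeg : g.degree < m := by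
    rcases eq_or_ne g 0 with h0 | hgne
    · rw [h0, degree_zero]
      exact WithBot.bot_lt_coe m
    · have h1 : (1 : WithBot ℕ) + g.degree ≤ m := by
        rw [← degree_X (R := ℂ), ← degree_mul, ← hg]; exact hfd
      rw [degree_eq_natDegree hgne] at h1 ⊢
      have : ((1 + g.natDegree : ℕ) : WithBot ℕ) ≤ (m : WithBot ℕ) := by
        push_cast; exact h1
      have hnat : 1 + g.natDegree ≤ m := by exact_mod_cast this
      have : g.natDegree < m := by omega
      exact_mod_cast this
  have hgk : ∀ k, g.eval (α k) = (∏ j, (α k - β j)) * (α k)⁻¹ := by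
    intro k
    have h := congrArg (eval (α k)) hg
    rw [eval_mul, eval_X, hfdef, eval_sub, eval_mul, eval_C, hQ0, hevP, mul_zero, sub_zero] at h
    have hk := hα0 k
    field_simp [hk]
    linear_combination -h
  have hgw : g.eval w = f.eval w * w⁻¹ := by
    have h := congrArg (eval w) hg
    rw [eval_mul, eval_X] at h
    field_simp [hw0]
    linear_combination -h
  have hcore := core_lagrange α hαinj w hw g hgdeg
  have hL : ∑ k : Fin m, (∏ j, (β j - α k)) *
        ((∏ j ∈ univ.erase k, (α j - α k))⁻¹ * (w * (α k)⁻¹ * (w - α k)⁻¹))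
      = -(w * ∑ k : Fin m, g.eval (α k) * ((∏ j ∈ univ.erase k, (α k - α j))⁻¹ * (w - α k)⁻¹)) := by
    rw [Finset.mul_sum, ← Finset.sum_neg_distrib]
    refine Finset.sum_congr rfl fun k _ => ?_
    have e1 : (∏ j, (β j - α k)) = (-1)^(#(univ : Finset (Fin m))) * ∏ j, (α k - β j) := by
      rw [sign_flip univ (fun j => β j - α k)]; congr 1; apply Finset.prod_congr rfl; intros; ring
    have e2 : (∏ j ∈ univ.erase k, (α j - α k))
        = (-1)^(#(univ.erase k)) * ∏ j ∈ univ.erase k, (α k - α j) := by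
      rw [sign_flip (univ.erase k) (fun j => α j - α k)]; congr 1
      apply Finset.prod_congr rfl; intros; ring
    have hcard : #(univ.erase k) + 1 = #(univ : Finset (Fin m)) :=
      Finset.card_erase_add_one (mem_univ k)
    have hne : ((-1 : ℂ))^(#(univ.erase k)) ≠ 0 := pow_ne_zero _ (by norm_num)
    rw [e1, e2, hgk k, ← hcard, pow_succ, mul_inv]
    linear_combination (-(∏ j, (α k - β j)) * (∏ j ∈ univ.erase k, (α k - α j))⁻¹ *
      ((α k)⁻¹ * w * (w - α k)⁻¹)) * (mul_inv_cancel₀ hne)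
  rw [hL, hcore, hgw, hfdef, eval_sub, eval_mul, eval_C, hevP, hevQ, hc]
  field_simp
  ring

lemma sin_exp_form (ρ : ℂ) (u v : ℂ) : Complex.sin (ρ * (u - v)) =
    (Complex.exp (2*ρ*Complex.I*u) - Complex.exp (2*ρ*Complex.I*v)) *
      (Complex.exp (-(ρ*Complex.I*(u+v))) * (2*Complex.I)⁻¹) := by
  rw [Complex.sin, ← mul_assoc]
  conv_rhs => rw [sub_mul, ← Complex.exp_add, ← Complex.exp_add]
  rw [show 2*ρ*Complex.I*u + -(ρ*Complex.I*(u+v)) = ρ*(u-v)*Complex.I by ring,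
    show 2*ρ*Complex.I*v + -(ρ*Complex.I*(u+v)) = -(ρ*(u-v)*Complex.I) by ring,
    show -(ρ*(u-v)) * Complex.I = -(ρ*(u-v)*Complex.I) by ring]
  have h2I : (2*Complex.I) ≠ 0 := by simp [Complex.I_ne_zero]
  field_simp
  linear_combination ((Complex.exp (-(ρ*(u-v)*Complex.I)) -
    Complex.exp (ρ*(u-v)*Complex.I))) * Complex.I_sq

lemma key1 (N D A B C E0 w αk W cn c : ℂ) (hD : D ≠ 0) (hA : A ≠ 0) (hB : B ≠ 0)
    (hC : C ≠ 0) (hW : W ≠ 0) (hαk : αk ≠ 0) (hcn : cn ≠ 0) (hc : c ≠ 0) :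
    (N * (A * (cn * c))) / (D * (B * cn)) * ((B * C * E0 * w) * (A * αk)⁻¹ / (W * (C * c)))
      = E0 * (N * (D⁻¹ * (w * αk⁻¹ * W⁻¹))) := by
  rw [mul_inv, div_mul_div_comm, div_eq_iff (by
    exact mul_ne_zero (mul_ne_zero hD (mul_ne_zero hB hcn)) (mul_ne_zero hW (mul_ne_zero hC hc)))]
  field_simp

lemma key2 (N D A B C E0 W cn c : ℂ) (hD : D ≠ 0) (hA : A ≠ 0) (hB : B ≠ 0)
    (hC : C ≠ 0) (hW : W ≠ 0) (hcn : cn ≠ 0) (hc : c ≠ 0) :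
    (N * (A * (cn * c))) / (D * (B * cn)) * ((B * C * E0) * A⁻¹ / (W * (C * c)))
      = E0 * (N * (D⁻¹ * W⁻¹)) := by
  rw [div_mul_div_comm, div_eq_iff (by
    exact mul_ne_zero (mul_ne_zero hD (mul_ne_zero hB hcn)) (mul_ne_zero hW (mul_ne_zero hC hc)))]
  field_simp

lemma keyR1 (X Qb Qa EA E0 cn1 : ℂ) (hQa : Qa ≠ 0) (hEA : EA ≠ 0) (hc : cn1 ≠ 0) :
    E0 * (X - Qb / Qa) = E0 * X - (Qb * (EA * E0 * cn1)) / (Qa * (EA * cn1)) := by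
  field_simp

lemma keyR2 (Qb Qa EA E0 cn1 : ℂ) (hQa : Qa ≠ 0) (hEA : EA ≠ 0) (hc : cn1 ≠ 0) :
    E0 * (1 - Qb / Qa) = E0 - (Qb * (EA * E0 * cn1)) / (Qa * (EA * cn1)) := by
  field_simp

/-- Hermite-type sine identity (Lemma 2.1 of the paper). -/
theorem hermite_sine_identity {m : ℕ} (hm : 1 ≤ m) (a b : Fin m → ℂ) (z : ℂ)
    (ha : ∀ j k : Fin m, j ≠ k → Complex.sin ((Real.pi : ℂ) * (a j - a k)) ≠ 0)
    (hz : ∀ k : Fin m, Complex.sin ((Real.pi : ℂ) * (z - a k)) ≠ 0)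
    (ε : ℂ) (hε : ε = 1 ∨ ε = -1) :
    ∑ k : Fin m,
      ((∏ j : Fin m, Complex.sin ((Real.pi : ℂ) * (b j - a k))) /
        (∏ j ∈ Finset.univ.erase k, Complex.sin ((Real.pi : ℂ) * (a j - a k)))) *
      (Complex.exp (ε * Complex.I * (Real.pi : ℂ) * (z - a k)) /
        Complex.sin ((Real.pi : ℂ) * (z - a k)))
    = Complex.exp (ε * Complex.I * (Real.pi : ℂ) * (∑ j : Fin m, (b j - a j))) -
      (∏ j : Fin m, Complex.sin ((Real.pi : ℂ) * (z - b j))) /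
      (∏ j : Fin m, Complex.sin ((Real.pi : ℂ) * (z - a j))) := by
  obtain ⟨n, rfl⟩ : ∃ n, m = n + 1 := ⟨m - 1, by omega⟩
  set ρ : ℂ := (Real.pi : ℂ) with hρ
  set cI : ℂ := (2*Complex.I)⁻¹ with hcI
  set w : ℂ := Complex.exp (2*ρ*Complex.I*z) with hwdef
  set α : Fin (n+1) → ℂ := fun k => Complex.exp (2*ρ*Complex.I*(a k)) with hαdef
  set β : Fin (n+1) → ℂ := fun j => Complex.exp (2*ρ*Complex.I*(b j)) with hβdef
  set Sa : ℂ := ∑ j : Fin (n+1), a j with hSa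
  set Sb : ℂ := ∑ j : Fin (n+1), b j with hSb
  set E0 : ℂ := Complex.exp (-(ρ*Complex.I*(Sb - Sa))) with hE0
  have hcne : cI ≠ 0 := by rw [hcI]; exact inv_ne_zero (by simp [Complex.I_ne_zero])
  have hcard_univ : #(univ : Finset (Fin (n+1))) = n + 1 := by simp
  have hcard_erase : ∀ k : Fin (n+1), #((univ : Finset (Fin (n+1))).erase k) = n := by
    intro k; rw [Finset.card_erase_of_mem (mem_univ k), card_univ, Fintype.card_fin]; omega
  have hαd : ∀ j k : Fin (n+1), j ≠ k → α j ≠ α k := by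
    intro j k hjk heq
    refine ha j k hjk ?_
    rw [sin_exp_form ρ (a j) (a k)]
    have : α j - α k = 0 := by rw [heq, sub_self]
    simp only [hαdef] at this
    rw [this, zero_mul]
  have hαinj : Function.Injective α := fun j k h => by
    by_contra hne; exact hαd j k hne h
  have hw0 : w ≠ 0 := Complex.exp_ne_zero _
  have hα0 : ∀ k, α k ≠ 0 := fun k => Complex.exp_ne_zero _
  have hwk : ∀ k, w ≠ α k := by
    intro k heq
    refine hz k ?_
    rw [sin_exp_form ρ z (a k)]
    have : w - α k = 0 := by rw [heq, sub_self]
    simp only [hwdef, hαdef] at this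
    rw [this, zero_mul]
  have hWne : ∀ k, w - α k ≠ 0 := fun k => sub_ne_zero_of_ne (hwk k)
  have hDne : ∀ k, (∏ j ∈ univ.erase k, (α j - α k)) ≠ 0 := fun k =>
    prod_ne_zero_iff.2 fun j hj => sub_ne_zero_of_ne (hαd j k (Finset.ne_of_mem_erase hj))
  have hprodWα : (∏ j, (w - α j)) ≠ 0 := prod_ne_zero_iff.2 fun j _ => hWne j
  have hprodα : (∏ j, α j) ≠ 0 := prod_ne_zero_iff.2 fun j _ => hα0 j
  -- product formulas
  have hnum : ∀ k : Fin (n+1), (∏ j, Complex.sin (ρ * (b j - a k)))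
      = (∏ j, (β j - α k)) *
        (Complex.exp (-(ρ*Complex.I*(Sb + (n+1)*(a k)))) * cI^(n+1)) := by
    intro k
    calc (∏ j, Complex.sin (ρ * (b j - a k)))
        = ∏ j, ((β j - α k) * (Complex.exp (-(ρ*Complex.I*(b j + a k))) * cI)) := by
          refine Finset.prod_congr rfl fun j _ => ?_
          rw [sin_exp_form ρ (b j) (a k)]
          try simp only [hαdef, hβdef, hcI]
      _ = (∏ j, (β j - α k)) *
            ((∏ j, Complex.exp (-(ρ*Complex.I*(b j + a k)))) * cI^(n+1)) := by
          rw [Finset.prod_mul_distrib, Finset.prod_mul_distrib, Finset.prod_const, hcard_univ]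
      _ = _ := by
          rw [← Complex.exp_sum]
          congr 3
          rw [Finset.sum_neg_distrib, ← Finset.mul_sum, Finset.sum_add_distrib,
            Finset.sum_const, card_univ, Fintype.card_fin, nsmul_eq_mul, ← hSb]
          push_cast; ring
  have hden : ∀ k : Fin (n+1), (∏ j ∈ univ.erase k, Complex.sin (ρ * (a j - a k)))
      = (∏ j ∈ univ.erase k, (α j - α k)) *
        (Complex.exp (-(ρ*Complex.I*((Sa - a k) + n*(a k)))) * cI^n) := by
    intro k
    calc (∏ j ∈ univ.erase k, Complex.sin (ρ * (a j - a k)))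
        = ∏ j ∈ univ.erase k, ((α j - α k) * (Complex.exp (-(ρ*Complex.I*(a j + a k))) * cI)) := by
          refine Finset.prod_congr rfl fun j _ => ?_
          rw [sin_exp_form ρ (a j) (a k)]
          try simp only [hαdef, hcI]
      _ = (∏ j ∈ univ.erase k, (α j - α k)) *
            ((∏ j ∈ univ.erase k, Complex.exp (-(ρ*Complex.I*(a j + a k)))) * cI^n) := by
          rw [Finset.prod_mul_distrib, Finset.prod_mul_distrib, Finset.prod_const, hcard_erase k]
      _ = _ := by
          rw [← Complex.exp_sum]
          congr 3
          rw [Finset.sum_neg_distrib, ← Finset.mul_sum, Finset.sum_add_distrib,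
            Finset.sum_erase_eq_sub (mem_univ k), Finset.sum_const, hcard_erase k,
            nsmul_eq_mul, ← hSa]
          try push_cast
          try ring
  have hzfact : ∀ k : Fin (n+1), Complex.sin (ρ * (z - a k))
      = (w - α k) * (Complex.exp (-(ρ*Complex.I*(z + a k))) * cI) := by
    intro k
    rw [sin_exp_form ρ z (a k)]
    try simp only [hwdef, hαdef, hcI]
  have hrb : (∏ j, Complex.sin (ρ * (z - b j)))
      = (∏ j, (w - β j)) * (Complex.exp (-(ρ*Complex.I*((n+1)*z + Sb))) * cI^(n+1)) := by
    calc (∏ j, Complex.sin (ρ * (z - b j)))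
        = ∏ j, ((w - β j) * (Complex.exp (-(ρ*Complex.I*(z + b j))) * cI)) := by
          refine Finset.prod_congr rfl fun j _ => ?_
          rw [sin_exp_form ρ z (b j)]
          try simp only [hwdef, hβdef, hcI]
      _ = (∏ j, (w - β j)) *
            ((∏ j, Complex.exp (-(ρ*Complex.I*(z + b j)))) * cI^(n+1)) := by
          rw [Finset.prod_mul_distrib, Finset.prod_mul_distrib, Finset.prod_const, hcard_univ]
      _ = _ := by
          rw [← Complex.exp_sum]
          congr 3
          rw [Finset.sum_neg_distrib, ← Finset.mul_sum, Finset.sum_add_distrib,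
            Finset.sum_const, card_univ, Fintype.card_fin, nsmul_eq_mul, ← hSb]
          push_cast; ring
  have hra : (∏ j, Complex.sin (ρ * (z - a j)))
      = (∏ j, (w - α j)) * (Complex.exp (-(ρ*Complex.I*((n+1)*z + Sa))) * cI^(n+1)) := by
    calc (∏ j, Complex.sin (ρ * (z - a j)))
        = ∏ j, ((w - α j) * (Complex.exp (-(ρ*Complex.I*(z + a j))) * cI)) := by
          refine Finset.prod_congr rfl fun j _ => ?_
          rw [sin_exp_form ρ z (a j)]
          try simp only [hwdef, hαdef, hcI]
      _ = (∏ j, (w - α j)) *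
            ((∏ j, Complex.exp (-(ρ*Complex.I*(z + a j)))) * cI^(n+1)) := by
          rw [Finset.prod_mul_distrib, Finset.prod_mul_distrib, Finset.prod_const, hcard_univ]
      _ = _ := by
          rw [← Complex.exp_sum]
          congr 3
          rw [Finset.sum_neg_distrib, ← Finset.mul_sum, Finset.sum_add_distrib,
            Finset.sum_const, card_univ, Fintype.card_fin, nsmul_eq_mul, ← hSa]
          push_cast; ring
  have hψ : (∑ j : Fin (n+1), (b j - a j)) = Sb - Sa := by
    rw [hSb, hSa, Finset.sum_sub_distrib]
  have hEBA : Complex.exp (-(ρ*Complex.I*((n+1)*z + Sb)))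
      = Complex.exp (-(ρ*Complex.I*((n+1)*z + Sa))) * E0 := by
    rw [hE0, ← Complex.exp_add]; congr 1; ring
  rcases hε with rfl | rfl
  · -- ε = 1
    have hprodβexp : (∏ j, β j) = Complex.exp (2*ρ*Complex.I*Sb) := by
      simp only [hβdef]
      rw [← Complex.exp_sum]
      congr 1
      rw [hSb, Finset.mul_sum]
    have hprodαexp : (∏ j, α j) = Complex.exp (2*ρ*Complex.I*Sa) := by
      simp only [hαdef]
      rw [← Complex.exp_sum]
      congr 1
      rw [hSa, Finset.mul_sum]
    have hterm : ∀ k ∈ (univ : Finset (Fin (n+1))),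
        ((∏ j, Complex.sin (ρ * (b j - a k))) /
          (∏ j ∈ univ.erase k, Complex.sin (ρ * (a j - a k)))) *
        (Complex.exp (1 * Complex.I * ρ * (z - a k)) / Complex.sin (ρ * (z - a k)))
        = E0 * ((∏ j, (β j - α k)) *
            ((∏ j ∈ univ.erase k, (α j - α k))⁻¹ * (w * (α k)⁻¹ * (w - α k)⁻¹))) := by
      intro k _
      have hEε : Complex.exp (1 * Complex.I * ρ * (z - a k))
          = (Complex.exp (-(ρ*Complex.I*((Sa - a k) + n*(a k)))) *
             Complex.exp (-(ρ*Complex.I*(z + a k))) * E0 * w) *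
            (Complex.exp (-(ρ*Complex.I*(Sb + (n+1)*(a k)))) * α k)⁻¹ := by
        rw [eq_mul_inv_iff_mul_eq₀ (by exact mul_ne_zero (Complex.exp_ne_zero _) (hα0 k))]
        simp only [hαdef, hwdef, hE0]
        rw [← Complex.exp_add, ← Complex.exp_add, ← Complex.exp_add, ← Complex.exp_add,
          ← Complex.exp_add]
        congr 1
        push_cast; ring
      rw [hnum k, hden k, hzfact k, hEε, pow_succ]
      have h1 := Complex.exp_ne_zero (-(ρ*Complex.I*(Sb + (n+1)*(a k))))
      have h2 := Complex.exp_ne_zero (-(ρ*Complex.I*((Sa - a k) + n*(a k))))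
      have h3 := Complex.exp_ne_zero (-(ρ*Complex.I*(z + a k)))
      have h4 := hDne k
      have h5 := hWne k
      have h6 := hα0 k
      have h7 : cI ^ n ≠ 0 := pow_ne_zero _ hcne
      exact key1 _ _ _ _ _ _ _ _ _ _ _ h4 h1 h2 h3 h5 h6 h7 hcne
    rw [Finset.sum_congr rfl hterm, ← Finset.mul_sum,
      alg1 α β w hαinj hα0 hw0 hwk, hψ, hrb, hra, hEBA]
    have hE1 : Complex.exp (1 * Complex.I * ρ * (Sb - Sa))
        = E0 * ((∏ j, β j) / (∏ j, α j)) := by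
      rw [hprodβexp, hprodαexp, hE0, div_eq_mul_inv, ← Complex.exp_neg, ← Complex.exp_add,
        ← Complex.exp_add]
      congr 1; ring
    rw [hE1]
    have h8 := Complex.exp_ne_zero (-(ρ*Complex.I*((n+1)*z + Sa)))
    have h9 : cI ^ (n+1) ≠ 0 := pow_ne_zero _ hcne
    exact keyR1 _ _ _ _ _ _ hprodWα h8 h9
  · -- ε = -1
    have hterm : ∀ k ∈ (univ : Finset (Fin (n+1))),
        ((∏ j, Complex.sin (ρ * (b j - a k))) /
          (∏ j ∈ univ.erase k, Complex.sin (ρ * (a j - a k)))) *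
        (Complex.exp (-1 * Complex.I * ρ * (z - a k)) / Complex.sin (ρ * (z - a k)))
        = E0 * ((∏ j, (β j - α k)) *
            ((∏ j ∈ univ.erase k, (α j - α k))⁻¹ * (w - α k)⁻¹)) := by
      intro k _
      have hEε : Complex.exp (-1 * Complex.I * ρ * (z - a k))
          = (Complex.exp (-(ρ*Complex.I*((Sa - a k) + n*(a k)))) *
             Complex.exp (-(ρ*Complex.I*(z + a k))) * E0) *
            (Complex.exp (-(ρ*Complex.I*(Sb + (n+1)*(a k)))))⁻¹ := by
        rw [eq_mul_inv_iff_mul_eq₀ (Complex.exp_ne_zero _)]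
        simp only [hE0]
        rw [← Complex.exp_add, ← Complex.exp_add, ← Complex.exp_add]
        congr 1
        push_cast; ring
      rw [hnum k, hden k, hzfact k, hEε, pow_succ]
      have h1 := Complex.exp_ne_zero (-(ρ*Complex.I*(Sb + (n+1)*(a k))))
      have h2 := Complex.exp_ne_zero (-(ρ*Complex.I*((Sa - a k) + n*(a k))))
      have h3 := Complex.exp_ne_zero (-(ρ*Complex.I*(z + a k)))
      have h4 := hDne k
      have h5 := hWne k
      have h7 : cI ^ n ≠ 0 := pow_ne_zero _ hcne
      exact key2 _ _ _ _ _ _ _ _ _ h4 h1 h2 h3 h5 h7 hcne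
    rw [Finset.sum_congr rfl hterm, ← Finset.mul_sum,
      alg2 α β w hαinj hwk, hψ, hrb, hra, hEBA]
    have hE1 : Complex.exp (-1 * Complex.I * ρ * (Sb - Sa)) = E0 := by
      rw [hE0]; congr 1; ring
    rw [hE1]
    have h8 := Complex.exp_ne_zero (-(ρ*Complex.I*((n+1)*z + Sa)))
    have h9 : cI ^ (n+1) ≠ 0 := pow_ne_zero _ hcne
    exact keyR2 _ _ _ _ _ hprodWα h8 h9
end

section
/- Let m ≥ 1 and let a = (a_1,…,a_m), b = (b_1,…,b_m) be complex vectors with sin(π(a_j − a_k)) ≠ 0 for all j ≠ k. Then ∑_{k=1}^{m} (∏_{j=1}^{m} sin(π(b_j − a_k))) / (∏_{j≠k} sin(π(a_j − a_k))) = sin(πψ), where ψ = ∑_{j=1}^{m} (b_j − a_j). -/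
open Finset Polynomial

open Finset Polynomial

lemma lagrange_coeff_sum {F : Type*} [Field F] {ι : Type*} [DecidableEq ι]
    (s : Finset ι) (v : ι → F) (hvs : Set.InjOn v s) (f : F[X]) (hf : f.degree < #s) :
    ∑ i ∈ s, f.eval (v i) * ∏ j ∈ s.erase i, (v i - v j)⁻¹ = f.coeff (#s - 1) := by
  have h := Lagrange.eq_interpolate hvs hf
  conv_rhs => rw [h]
  rw [Lagrange.interpolate_apply, finset_sum_coeff]
  refine (Finset.sum_congr rfl fun i hi => ?_).symm
  rw [coeff_C_mul]
  congr 1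
  have hb : Lagrange.basis s v i = C (∏ j ∈ s.erase i, (v i - v j)⁻¹) *
      Lagrange.nodal (s.erase i) v := by
    rw [Lagrange.basis, Lagrange.nodal, map_prod, ← prod_mul_distrib]
    rfl
  have hd : #s - 1 = (Lagrange.nodal (s.erase i) v).natDegree := by
    rw [Lagrange.natDegree_nodal, Finset.card_erase_of_mem hi]
  rw [hb, coeff_C_mul, hd, Lagrange.nodal_monic.coeff_natDegree, mul_one]

lemma erase_none_eq {α : Type*} [Fintype α] [DecidableEq α] :
    (univ : Finset (Option α)).erase none = univ.image some := by
  ext o; cases o <;> simp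

lemma erase_some_eq {α : Type*} [Fintype α] [DecidableEq α] (k : α) :
    (univ : Finset (Option α)).erase (some k)
      = insert none ((univ.erase k).image some) := by
  ext o; cases o <;> simp

lemma prod_erase_some {α : Type*} [Fintype α] [DecidableEq α] (g : Option α → ℂ) (k : α) :
    ∏ j ∈ (univ : Finset (Option α)).erase (some k), g j
      = g none * ∏ j ∈ univ.erase k, g (some j) := by
  rw [erase_some_eq, Finset.prod_insert (by simp), Finset.prod_image
    (fun x _ y _ h => Option.some_injective _ h)]

lemma alg_identity {m : ℕ} (U V : Fin m → ℂ) (hV0 : ∀ k, V k ≠ 0)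
    (hVinj : Function.Injective V) :
    ∑ k : Fin m, (∏ j : Fin m, (U j - V k)) /
        (V k * ∏ j ∈ univ.erase k, (V j - V k))
      = (∏ j : Fin m, U j) / (∏ j : Fin m, V j) - 1 := by
  classical
  set w : Option (Fin m) → ℂ := fun o => o.elim 0 (fun k => -V k) with hw
  have hinj : Set.InjOn w (univ : Finset (Option (Fin m))) := by
    rintro (_ | x) - (_ | y) - h
    · rfl
    · simp only [hw, Option.elim] at h
      exact (hV0 y (neg_eq_zero.mp h.symm)).elim
    · simp only [hw, Option.elim] at h
      exact (hV0 x (neg_eq_zero.mp h)).elim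
    · simp only [hw, Option.elim] at h
      exact congrArg some (hVinj (neg_injective h))
  set f : ℂ[X] := ∏ j : Fin m, (X + C (U j)) with hf
  have hmono : f.Monic := monic_prod_of_monic _ _ fun j _ => monic_X_add_C _
  have hdeg : f.natDegree = m := by
    rw [hf, natDegree_prod_of_monic _ _ fun j _ => monic_X_add_C _]
    simp [natDegree_X_add_C]
  have hcard : #(univ : Finset (Option (Fin m))) = m + 1 := by simp
  have hlt : f.degree < #(univ : Finset (Option (Fin m))) := by
    rw [hcard]
    have h1 : f.degree ≤ (m : WithBot ℕ) := by rw [← hdeg]; exact degree_le_natDegree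
    exact lt_of_le_of_lt h1 (by exact_mod_cast Nat.lt_succ_self m)
  have key := lagrange_coeff_sum univ w hinj f hlt
  have hc : f.coeff m = 1 := by rw [← hdeg]; exact hmono.coeff_natDegree
  rw [hcard, Nat.add_sub_cancel, hc, Fintype.sum_option] at key
  have hnone : f.eval (w none) * ∏ j ∈ (univ : Finset (Option (Fin m))).erase none,
      (w none - w j)⁻¹ = (∏ j : Fin m, U j) / (∏ j : Fin m, V j) := by
    rw [erase_none_eq, Finset.prod_image (fun x _ y _ h => Option.some_injective _ h)]
    simp only [hw, hf, Option.elim, eval_prod, eval_add, eval_X, eval_C]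
    rw [div_eq_mul_inv, ← Finset.prod_inv_distrib]
    congr 1
    · exact Finset.prod_congr rfl fun j _ => by ring
    · exact Finset.prod_congr rfl fun j _ => by simp
  have hsome : ∀ k : Fin m, f.eval (w (some k)) *
      ∏ j ∈ (univ : Finset (Option (Fin m))).erase (some k), (w (some k) - w j)⁻¹
      = -((∏ j : Fin m, (U j - V k)) / (V k * ∏ j ∈ univ.erase k, (V j - V k))) := by
    intro k
    rw [prod_erase_some]
    simp only [hw, hf, Option.elim, eval_prod, eval_add, eval_X, eval_C]
    rw [div_eq_mul_inv, mul_inv, ← Finset.prod_inv_distrib]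
    have h1 : (∏ j : Fin m, (-V k + U j)) = ∏ j : Fin m, (U j - V k) :=
      Finset.prod_congr rfl fun j _ => by ring
    have h2 : (∏ j ∈ univ.erase k, (-V k - -V j)⁻¹) = ∏ j ∈ univ.erase k, (V j - V k)⁻¹ :=
      Finset.prod_congr rfl fun j _ => by ring_nf
    rw [h1, h2]
    have : (-V k - 0)⁻¹ = -(V k)⁻¹ := by rw [sub_zero, inv_neg]
    rw [this]; ring
  rw [hnone, Finset.sum_congr rfl (fun k _ => hsome k), Finset.sum_neg_distrib] at key
  linear_combination -key
open Finset Polynomial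

lemma sin_formula (x y : ℂ) :
    Complex.sin ((Real.pi : ℂ) * (x - y)) =
      (Complex.exp ((Real.pi : ℂ) * Complex.I * x) ^ 2
        - Complex.exp ((Real.pi : ℂ) * Complex.I * y) ^ 2) /
      (2 * Complex.I *
        (Complex.exp ((Real.pi : ℂ) * Complex.I * x)
          * Complex.exp ((Real.pi : ℂ) * Complex.I * y))) := by
  have h1 : Complex.exp (-((Real.pi : ℂ) * (x - y)) * Complex.I)
      * Complex.exp ((Real.pi : ℂ) * Complex.I * x)
      = Complex.exp ((Real.pi : ℂ) * Complex.I * y) := by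
    rw [← Complex.exp_add]; ring_nf
  have h2 : Complex.exp (((Real.pi : ℂ) * (x - y)) * Complex.I)
      * Complex.exp ((Real.pi : ℂ) * Complex.I * y)
      = Complex.exp ((Real.pi : ℂ) * Complex.I * x) := by
    rw [← Complex.exp_add]; ring_nf
  rw [eq_div_iff (by
      simp [Complex.I_ne_zero, Complex.exp_ne_zero])]
  rw [Complex.sin]
  set A := Complex.exp (-((Real.pi : ℂ) * (x - y)) * Complex.I)
  set B := Complex.exp (((Real.pi : ℂ) * (x - y)) * Complex.I)
  set X := Complex.exp ((Real.pi : ℂ) * Complex.I * x)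
  set Y := Complex.exp ((Real.pi : ℂ) * Complex.I * y)
  linear_combination (-Y) * h1 + X * h2 + ((A - B) * X * Y) * Complex.I_sq
lemma term_algebra0 (A B Pu Pk w c C Wn : ℂ) (hB : B ≠ 0) (hPu : Pu ≠ 0)
    (hPk : Pk ≠ 0) (hw : w ≠ 0) (hc : c ≠ 0) (hC : C ≠ 0) (hWn : Wn ≠ 0) :
    (A / (c * C * Pu * (w * Wn))) / (B / (C * Pk * Wn))
      = (A / (w ^ 2 * B)) * ((Pk * w) / (c * Pu)) := by
  rw [div_div_eq_mul_div, div_mul_eq_mul_div, div_div, div_mul_div_comm,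
    div_eq_div_iff
      (mul_ne_zero (mul_ne_zero (mul_ne_zero (mul_ne_zero hc hC) hPu)
        (mul_ne_zero hw hWn)) hB)
      (mul_ne_zero (mul_ne_zero (pow_ne_zero 2 hw) hB) (mul_ne_zero hc hPu))]
  ring

lemma term_algebra {n : ℕ} (A B Pu Pk w c : ℂ) (hB : B ≠ 0) (hPu : Pu ≠ 0)
    (hPk : Pk ≠ 0) (hw : w ≠ 0) (hc : c ≠ 0) :
    (A / (c ^ (n + 1) * Pu * w ^ (n + 1))) / (B / (c ^ n * Pk * w ^ n))
      = (A / (w ^ 2 * B)) * ((Pk * w) / (c * Pu)) := by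
  have h1 : c ^ (n + 1) * Pu * w ^ (n + 1) = c * c ^ n * Pu * (w * w ^ n) := by ring
  rw [h1]
  exact term_algebra0 A B Pu Pk w c (c ^ n) (w ^ n) hB hPu hPk hw hc
    (pow_ne_zero _ hc) (pow_ne_zero _ hw)

/-- Sine analogue of a Ptolemy-type relation (identity (2.2) of the paper). -/
theorem sine_ptolemy_identity {m : ℕ} (hm : 1 ≤ m) (a b : Fin m → ℂ)
    (ha : ∀ j k : Fin m, j ≠ k → Complex.sin ((Real.pi : ℂ) * (a j - a k)) ≠ 0) :
    ∑ k : Fin m,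
      (∏ j : Fin m, Complex.sin ((Real.pi : ℂ) * (b j - a k))) /
        (∏ j ∈ Finset.univ.erase k, Complex.sin ((Real.pi : ℂ) * (a j - a k)))
    = Complex.sin ((Real.pi : ℂ) * (∑ j : Fin m, (b j - a j))) := by
  classical
  obtain ⟨n, rfl⟩ : ∃ n, m = n + 1 := ⟨m - 1, (Nat.succ_pred_eq_of_pos hm).symm⟩
  set u : Fin (n + 1) → ℂ := fun j => Complex.exp ((Real.pi : ℂ) * Complex.I * b j) with hu
  set v : Fin (n + 1) → ℂ := fun j => Complex.exp ((Real.pi : ℂ) * Complex.I * a j) with hv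
  set U : Fin (n + 1) → ℂ := fun j => u j ^ 2 with hU
  set V : Fin (n + 1) → ℂ := fun j => v j ^ 2 with hV
  have hu0 : ∀ j, u j ≠ 0 := fun j => Complex.exp_ne_zero _
  have hv0 : ∀ j, v j ≠ 0 := fun j => Complex.exp_ne_zero _
  have hV0 : ∀ j, V j ≠ 0 := fun j => pow_ne_zero _ (hv0 j)
  have hsb : ∀ j k, Complex.sin ((Real.pi : ℂ) * (b j - a k))
      = (U j - V k) / (2 * Complex.I * (u j * v k)) := fun j k => sin_formula (b j) (a k)
  have hsa : ∀ j k, Complex.sin ((Real.pi : ℂ) * (a j - a k))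
      = (V j - V k) / (2 * Complex.I * (v j * v k)) := fun j k => sin_formula (a j) (a k)
  have hVinj : Function.Injective V := by
    intro j k h
    by_contra hne
    exact ha j k hne (by rw [hsa j k, h, sub_self, zero_div])
  have hVne : ∀ j k : Fin (n + 1), j ≠ k → V j - V k ≠ 0 :=
    fun j k hjk => sub_ne_zero_of_ne (fun h => hjk (hVinj h))
  have hIne : (2 : ℂ) * Complex.I ≠ 0 := by simp [Complex.I_ne_zero]
  -- per-term identity
  have hterm : ∀ k : Fin (n + 1),
      (∏ j : Fin (n + 1), Complex.sin ((Real.pi : ℂ) * (b j - a k))) /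
        (∏ j ∈ Finset.univ.erase k, Complex.sin ((Real.pi : ℂ) * (a j - a k)))
      = ((∏ j : Fin (n + 1), (U j - V k)) /
          (V k * ∏ j ∈ univ.erase k, (V j - V k))) *
        ((∏ j : Fin (n + 1), v j) / (2 * Complex.I * ∏ j : Fin (n + 1), u j)) := by
    intro k
    have hnum : (∏ j : Fin (n + 1), Complex.sin ((Real.pi : ℂ) * (b j - a k)))
        = (∏ j : Fin (n + 1), (U j - V k)) /
          ((2 * Complex.I) ^ (n + 1) * (∏ j : Fin (n + 1), u j) * v k ^ (n + 1)) := by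
      rw [Finset.prod_congr rfl fun j _ => hsb j k, Finset.prod_div_distrib]
      congr 1
      simp only [Finset.prod_mul_distrib, Finset.prod_const, Finset.card_univ,
        Fintype.card_fin]
      ring
    have hden : (∏ j ∈ Finset.univ.erase k, Complex.sin ((Real.pi : ℂ) * (a j - a k)))
        = (∏ j ∈ univ.erase k, (V j - V k)) /
          ((2 * Complex.I) ^ n * (∏ j ∈ univ.erase k, v j) * v k ^ n) := by
      rw [Finset.prod_congr rfl fun j _ => hsa j k, Finset.prod_div_distrib]
      congr 1
      simp only [Finset.prod_mul_distrib, Finset.prod_const,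
        Finset.card_erase_of_mem (mem_univ k), Finset.card_univ,
        Fintype.card_fin, Nat.add_sub_cancel]
      ring
    rw [hnum, hden]
    have hPk : (∏ j ∈ univ.erase k, v j) * v k = ∏ j : Fin (n + 1), v j :=
      Finset.prod_erase_mul univ v (mem_univ k)
    rw [← hPk]
    have h1 : (∏ j ∈ univ.erase k, (V j - V k)) ≠ 0 :=
      Finset.prod_ne_zero_iff.mpr fun j hj => hVne j k (Finset.mem_erase.mp hj).1
    have h2 : (∏ j ∈ univ.erase k, v j) ≠ 0 :=
      Finset.prod_ne_zero_iff.mpr fun j _ => hv0 j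
    have h3 : (∏ j : Fin (n + 1), u j) ≠ 0 :=
      Finset.prod_ne_zero_iff.mpr fun j _ => hu0 j
    simp only [hU, hV] at h1 ⊢
    exact term_algebra _ _ _ _ _ _ h1 h3 h2 (hv0 k) hIne
  rw [Finset.sum_congr rfl fun k _ => hterm k, ← Finset.sum_mul,
    alg_identity U V hV0 hVinj]
  -- right-hand side
  have hsum : (∑ j : Fin (n + 1), (b j - a j)) =
      (∑ j : Fin (n + 1), b j) - (∑ j : Fin (n + 1), a j) := Finset.sum_sub_distrib _ _
  rw [hsum, sin_formula]
  have heb : Complex.exp ((Real.pi : ℂ) * Complex.I * ∑ j : Fin (n + 1), b j)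
      = ∏ j : Fin (n + 1), u j := by
    rw [Finset.mul_sum, Complex.exp_sum]
  have hea : Complex.exp ((Real.pi : ℂ) * Complex.I * ∑ j : Fin (n + 1), a j)
      = ∏ j : Fin (n + 1), v j := by
    rw [Finset.mul_sum, Complex.exp_sum]
  rw [heb, hea]
  have hPU : (∏ j : Fin (n + 1), U j) = (∏ j : Fin (n + 1), u j) ^ 2 := by
    rw [hU, Finset.prod_pow]
  have hPV : (∏ j : Fin (n + 1), V j) = (∏ j : Fin (n + 1), v j) ^ 2 := by
    rw [hV, Finset.prod_pow]
  rw [hPU, hPV]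
  have h3 : (∏ j : Fin (n + 1), u j) ≠ 0 :=
    Finset.prod_ne_zero_iff.mpr fun j _ => hu0 j
  have h4 : (∏ j : Fin (n + 1), v j) ≠ 0 :=
    Finset.prod_ne_zero_iff.mpr fun j _ => hv0 j
  field_simp
end

section
/- Let m ≥ 1, n ≥ 0, p = m + n, and let a, b ∈ ℝ^p satisfy: a_i − a_j ∉ ℤ for all i ≠ j, a_i − b_j ∉ ℤ for all i, j, and 2·a_k ∉ ℤ for k = 1,…,m. Then for every x with 0 < x < 1, the one-sided limits L_+ = lim_{ε→0⁺} G[a, b, m, n](−x + iε) and L_− = lim_{ε→0⁺} G[a, b, m, n](−x − iε) exist, and they satisfy Re L_+ = Re L_− = −π · G[(a, 3/2), (b, 3/2), m, n](x) and Im L_+ = −Im L_− = π · G[(a, 1), (b, 1), m, n](x), where (a, c) ∈ ℝ^{p+1} denotes the vector a with the number c appended as last component. -/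
open Finset

/-- Pochhammer symbol `(x)_n = x (x+1) ⋯ (x+n−1)`. -/
noncomputable def poch (x : ℂ) (n : ℕ) : ℂ := ∏ i ∈ Finset.range n, (x + (i : ℂ))

/-- The internal Meijer G-series `G[α, β, m', n'](z)` (hypergeometric expansion of
Meijer's `G^{m',n'}_{P,P}(z | β; α)` in the simple-pole case): `α` is the lower row,
`β` the upper row.  The inner series is the generalized hypergeometric series
`F(1 − β + α_k; 1 − α_{[k]} + α_k; (−1)^{P−m'−n'} z)`, written with the deleted-index
product in the denominator together with the factor `n!`. -/
noncomputable def meijerG {P : ℕ} (α β : Fin P → ℂ) (m' n' : ℕ) (z : ℂ) : ℂ :=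
  ∑ k ∈ Finset.univ.filter (fun k : Fin P => (k : ℕ) < m'),
    z ^ (α k) *
      (((∏ j ∈ (Finset.univ.filter (fun j : Fin P => (j : ℕ) < m')).erase k,
            Complex.Gamma (α j - α k)) *
          ∏ j ∈ Finset.univ.filter (fun j : Fin P => (j : ℕ) < n'),
            Complex.Gamma (1 - β j + α k)) /
        ((∏ j ∈ Finset.univ.filter (fun j : Fin P => m' ≤ (j : ℕ)),
            Complex.Gamma (1 - α j + α k)) *
          ∏ j ∈ Finset.univ.filter (fun j : Fin P => n' ≤ (j : ℕ)),
            Complex.Gamma (β j - α k))) *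
      ∑' n : ℕ,
        ((∏ j : Fin P, poch (1 - β j + α k) n) /
            ((∏ j ∈ Finset.univ.erase k, poch (1 - α j + α k) n) * (n.factorial : ℂ))) *
          ((-1 : ℂ) ^ (P - m' - n') * z) ^ n


/- ## Auxiliary material -/

section aux
open Filter Topology Complex

lemma poch_succ (x : ℂ) (n : ℕ) : poch x (n+1) = poch x n * (x + n) := by
  simp [poch, Finset.prod_range_succ]

lemma poch_ne_zero {x : ℂ} (h : ∀ i : ℕ, x + (i:ℂ) ≠ 0) (n : ℕ) : poch x n ≠ 0 :=
  Finset.prod_ne_zero_iff.2 fun i _ => h i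

lemma conj_poch (x : ℂ) (n : ℕ) : (starRingEnd ℂ) (poch x n) = poch ((starRingEnd ℂ) x) n := by
  simp [poch]

lemma conj_tsum' (f : ℕ → ℂ) :
    (starRingEnd ℂ) (∑' N, f N) = ∑' N, (starRingEnd ℂ) (f N) :=
  Complex.conjCLE.map_tsum

open Filter Topology in
lemma tendsto_shift_quot (c d : ℂ) :
    Tendsto (fun N : ℕ => (c + N) / (d + N)) atTop (𝓝 1) := by
  have hd : Tendsto (fun N : ℕ => ‖(d + (N:ℂ) : ℂ)‖) atTop atTop := by
    apply tendsto_atTop_mono (f := fun N : ℕ => d.re + (N:ℝ))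
    · intro N
      have := Complex.re_le_norm (d + (N:ℂ))
      simpa using this
    · exact tendsto_atTop_add_const_left _ d.re tendsto_natCast_atTop_atTop
  have h0 : Tendsto (fun N : ℕ => (c - d) / (d + (N:ℂ))) atTop (𝓝 0) := by
    rw [tendsto_zero_iff_norm_tendsto_zero]
    simp only [norm_div]
    exact Tendsto.div_atTop tendsto_const_nhds hd
  have h1 : Tendsto (fun N : ℕ => 1 + (c - d) / (d + (N:ℂ))) atTop (𝓝 1) := by
    simpa using tendsto_const_nhds.add h0
  apply h1.congr'
  have : ∀ᶠ N : ℕ in atTop, (d + (N:ℂ)) ≠ 0 := by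
    filter_upwards [hd.eventually_gt_atTop 0] with N hN
    intro h; rw [h] at hN; simp at hN
  filter_upwards [this] with N hN
  field_simp
  ring

open Filter Topology in
lemma summable_hyper {P : ℕ} (u v : Fin P → ℂ) (k : Fin P)
    (hu : ∀ j (N : ℕ), u j + (N:ℂ) ≠ 0) (hv : ∀ j, j ≠ k → ∀ N : ℕ, v j + (N:ℂ) ≠ 0)
    {r : ℝ} (hr0 : 0 < r) (hr1 : r < 1) :
    Summable (fun N : ℕ =>
      ‖(∏ j, poch (u j) N) / ((∏ j ∈ Finset.univ.erase k, poch (v j) N) * (N.factorial : ℂ))‖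
        * r ^ N) := by
  set c : ℕ → ℂ := fun N =>
    (∏ j, poch (u j) N) / ((∏ j ∈ Finset.univ.erase k, poch (v j) N) * (N.factorial : ℂ)) with hc
  show Summable (fun N : ℕ => ‖c N‖ * r ^ N)
  have hden : ∀ N : ℕ, (∏ j ∈ Finset.univ.erase k, poch (v j) N) * (N.factorial : ℂ) ≠ 0 := by
    intro N
    refine mul_ne_zero (Finset.prod_ne_zero_iff.2 fun j hj => ?_)
      (by exact_mod_cast N.factorial_ne_zero)
    exact poch_ne_zero (hv j (Finset.ne_of_mem_erase hj)) N
  have hcne : ∀ N, c N ≠ 0 := by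
    intro N
    exact div_ne_zero (Finset.prod_ne_zero_iff.2 fun j _ => poch_ne_zero (hu j) N) (hden N)
  set w : Fin P → ℂ := fun j => if j = k then 1 else v j with hw
  set Q : ℕ → ℂ := fun N => ∏ j, (u j + N) / (w j + N) with hQ
  have key : ∀ N, c (N + 1) = c N * Q N := by
    intro N
    have h1 : ∏ j, poch (u j) (N+1) = (∏ j, poch (u j) N) * ∏ j, (u j + (N:ℂ)) := by
      rw [← Finset.prod_mul_distrib]; simp [poch_succ]
    have h2 : ∏ j ∈ Finset.univ.erase k, poch (v j) (N+1)
        = (∏ j ∈ Finset.univ.erase k, poch (v j) N)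
          * ∏ j ∈ Finset.univ.erase k, (v j + (N:ℂ)) := by
      rw [← Finset.prod_mul_distrib]; simp [poch_succ]
    have h3' : ∏ j ∈ Finset.univ.erase k, (w j + (N:ℂ))
        = ∏ j ∈ Finset.univ.erase k, (v j + (N:ℂ)) :=
      Finset.prod_congr rfl fun j hj => by simp [hw, Finset.ne_of_mem_erase hj]
    have h3 : ∏ j, (w j + (N:ℂ)) = (∏ j ∈ Finset.univ.erase k, (v j + N)) * (1 + N) := by
      rw [← Finset.mul_prod_erase Finset.univ (fun j => w j + (N:ℂ)) (Finset.mem_univ k), h3']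
      simp [hw, mul_comm]
    have h4 : Q N = (∏ j, (u j + (N:ℂ))) / ∏ j, (w j + (N:ℂ)) := by
      simp only [hQ]; rw [Finset.prod_div_distrib]
    have hfact : ((N+1).factorial : ℂ) = (N.factorial : ℂ) * (1 + N) := by
      push_cast [Nat.factorial_succ]; ring
    rw [hc]
    simp only [h1, h2, h4, h3, hfact]
    rw [div_mul_div_comm]
    congr 1
    ring
  apply summable_of_ratio_test_tendsto_lt_one hr1
  · filter_upwards with N
    exact mul_ne_zero (norm_ne_zero_iff.2 (hcne N)) (pow_ne_zero _ (ne_of_gt hr0))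
  · have hQt : Tendsto Q atTop (𝓝 1) := by
      have : Tendsto (fun N : ℕ => ∏ j : Fin P, (u j + (N:ℂ)) / (w j + (N:ℂ))) atTop
          (𝓝 (∏ _j : Fin P, (1:ℂ))) :=
        tendsto_finset_prod _ (fun j _ => tendsto_shift_quot (u j) (w j))
      simpa [hQ] using this
    have hQt' : Tendsto (fun N => ‖Q N‖ * r) atTop (𝓝 r) := by
      have := (hQt.norm).mul_const r
      simpa using this
    apply hQt'.congr'
    filter_upwards with N
    have hnorm : ‖c N‖ ≠ 0 := norm_ne_zero_iff.2 (hcne N)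
    have hrN : (0:ℝ) < r ^ N := pow_pos hr0 N
    rw [Real.norm_of_nonneg (by positivity), Real.norm_of_nonneg (by positivity)]
    rw [key N, norm_mul, pow_succ]
    rw [show (‖c N‖ * ‖Q N‖) * (r ^ N * r) = (‖Q N‖ * r) * (‖c N‖ * r ^ N) by ring,
      mul_div_assoc, div_self (mul_ne_zero hnorm hrN.ne'), mul_one]

lemma continuousAt_hyperSum {c : ℕ → ℂ} {r : ℝ}
    (hsum : Summable fun N => ‖c N‖ * r ^ N) {w : ℂ} (hw : ‖w‖ < r) :
    ContinuousAt (fun z : ℂ => ∑' N : ℕ, c N * z ^ N) w := by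
  have hc : ContinuousOn (fun z : ℂ => ∑' N : ℕ, c N * z ^ N) (Metric.closedBall 0 r) := by
    apply continuousOn_tsum (fun N => (continuous_const.mul (continuous_pow N)).continuousOn) hsum
    intro N z hz
    show ‖c N * z ^ N‖ ≤ ‖c N‖ * r ^ N
    rw [norm_mul, norm_pow]
    have hz' : ‖z‖ ≤ r := by simpa [dist_zero_right] using Metric.mem_closedBall.1 hz
    gcongr
  exact hc.continuousAt (Metric.closedBall_mem_nhds_of_mem (by simpa [dist_zero_right] using hw))

lemma cwa_cpow (x : ℝ) (hx : 0 < x) (s : ℂ) :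
    ContinuousWithinAt (fun z : ℂ => z ^ s) {z : ℂ | 0 ≤ z.im} (-(x:ℂ)) := by
  have hre : (-(x:ℂ)).re < 0 := by simpa using hx
  have him : (-(x:ℂ)).im = 0 := by simp
  have hlog := Complex.continuousWithinAt_log_of_re_neg_of_im_zero hre him
  have hexp : ContinuousWithinAt (fun z : ℂ => Complex.exp (Complex.log z * s))
      {z : ℂ | 0 ≤ z.im} (-(x:ℂ)) :=
    Complex.continuous_exp.continuousAt.comp_continuousWithinAt
      (hlog.mul continuousWithinAt_const)
  apply hexp.congr_of_eventuallyEq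
  · have hne : {z : ℂ | z ≠ 0} ∈ 𝓝[{z : ℂ | 0 ≤ z.im}] (-(x:ℂ)) := by
      apply mem_nhdsWithin_of_mem_nhds
      exact IsOpen.mem_nhds isOpen_ne (by simp [hx.ne'])
    filter_upwards [hne] with z hz
    exact Complex.cpow_def_of_ne_zero hz s
  · exact Complex.cpow_def_of_ne_zero (by simp [hx.ne']) s

lemma log_neg_real (x : ℝ) (hx : 0 < x) :
    Complex.log (-(x:ℂ)) = (Real.log x : ℂ) + Real.pi * Complex.I := by
  apply Complex.ext
  · simp [Complex.log_re, abs_of_pos hx]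
  · simp only [Complex.log_im]
    rw [Complex.arg_eq_pi_iff.2 ⟨by simpa using hx, by simp⟩]
    simp

lemma neg_cpow_real (x : ℝ) (hx : 0 < x) (t : ℝ) :
    (-(x:ℂ)) ^ (t:ℂ)
      = ((x ^ t : ℝ) : ℂ) * (((Real.cos (Real.pi * t) : ℝ) : ℂ)
          + ((Real.sin (Real.pi * t) : ℝ):ℂ) * Complex.I) := by
  rw [Complex.cpow_def_of_ne_zero (by simpa using ne_of_gt hx : -(x:ℂ) ≠ 0),
    log_neg_real x hx]
  have : ((Real.log x : ℂ) + Real.pi * Complex.I) * (t:ℂ)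
      = ((Real.log x * t : ℝ) : ℂ) + ((Real.pi * t : ℝ) : ℂ) * Complex.I := by
    push_cast; ring
  rw [this, Complex.exp_add, Complex.exp_mul_I]
  rw [← Complex.ofReal_exp, ← Complex.ofReal_cos, ← Complex.ofReal_sin]
  rw [Real.rpow_def_of_pos hx]

/-- The Gamma-factor of the `k`-th term of the internal G-series. -/
noncomputable def Gcoef {P : ℕ} (α β : Fin P → ℂ) (m' n' : ℕ) (k : Fin P) : ℂ :=
  ((∏ j ∈ (Finset.univ.filter (fun j : Fin P => (j : ℕ) < m')).erase k,
        Complex.Gamma (α j - α k)) *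
      ∏ j ∈ Finset.univ.filter (fun j : Fin P => (j : ℕ) < n'),
        Complex.Gamma (1 - β j + α k)) /
    ((∏ j ∈ Finset.univ.filter (fun j : Fin P => m' ≤ (j : ℕ)),
        Complex.Gamma (1 - α j + α k)) *
      ∏ j ∈ Finset.univ.filter (fun j : Fin P => n' ≤ (j : ℕ)),
        Complex.Gamma (β j - α k))

/-- The hypergeometric coefficients of the `k`-th term of the internal G-series. -/
noncomputable def hcoef {P : ℕ} (α β : Fin P → ℂ) (k : Fin P) (N : ℕ) : ℂ :=
  (∏ j : Fin P, poch (1 - β j + α k) N) /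
    ((∏ j ∈ Finset.univ.erase k, poch (1 - α j + α k) N) * (N.factorial : ℂ))

/-- The hypergeometric series of the `k`-th term of the internal G-series. -/
noncomputable def hsum {P : ℕ} (α β : Fin P → ℂ) (k : Fin P) (z : ℂ) : ℂ :=
  ∑' N : ℕ, hcoef α β k N * z ^ N

lemma meijerG_eq {P : ℕ} (α β : Fin P → ℂ) (m' n' : ℕ) (z : ℂ) :
    meijerG α β m' n' z
      = ∑ k ∈ Finset.univ.filter (fun k : Fin P => (k : ℕ) < m'),
          z ^ α k * Gcoef α β m' n' k * hsum α β k ((-1 : ℂ) ^ (P - m' - n') * z) := rfl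

section reindex
variable {P : ℕ} (g : Fin (P + 1) → ℂ)

lemma prod_cs_filter_lt (m' : ℕ) (hm' : m' ≤ P) :
    ∏ j ∈ Finset.univ.filter (fun j : Fin (P+1) => (j : ℕ) < m'), g j
      = ∏ j ∈ Finset.univ.filter (fun j : Fin P => (j : ℕ) < m'), g j.castSucc := by
  rw [Finset.prod_filter, Finset.prod_filter, Fin.prod_univ_castSucc]
  simp [Fin.val_last, Nat.not_lt.2 hm']

lemma sum_cs_filter_lt (m' : ℕ) (hm' : m' ≤ P) :
    ∑ j ∈ Finset.univ.filter (fun j : Fin (P+1) => (j : ℕ) < m'), g j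
      = ∑ j ∈ Finset.univ.filter (fun j : Fin P => (j : ℕ) < m'), g j.castSucc := by
  rw [Finset.sum_filter, Finset.sum_filter, Fin.sum_univ_castSucc]
  simp [Fin.val_last, Nat.not_lt.2 hm']

lemma prod_cs_filter_le (m' : ℕ) (hm' : m' ≤ P) :
    ∏ j ∈ Finset.univ.filter (fun j : Fin (P+1) => m' ≤ (j : ℕ)), g j
      = (∏ j ∈ Finset.univ.filter (fun j : Fin P => m' ≤ (j : ℕ)), g j.castSucc)
          * g (Fin.last P) := by
  rw [Finset.prod_filter, Finset.prod_filter, Fin.prod_univ_castSucc]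
  simp [Fin.val_last, hm']

lemma prod_cs_erase_filter_lt (m' : ℕ) (hm' : m' ≤ P) (k : Fin P) :
    ∏ j ∈ (Finset.univ.filter (fun j : Fin (P+1) => (j : ℕ) < m')).erase k.castSucc, g j
      = ∏ j ∈ (Finset.univ.filter (fun j : Fin P => (j : ℕ) < m')).erase k, g j.castSucc := by
  rw [← Finset.filter_ne', ← Finset.filter_ne', Finset.filter_filter, Finset.filter_filter,
    Finset.prod_filter, Finset.prod_filter, Fin.prod_univ_castSucc]
  have hlast : ¬((Fin.last P : ℕ) < m' ∧ Fin.last P ≠ k.castSucc) := by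
    simp [Fin.val_last, Nat.not_lt.2 hm']
  rw [if_neg hlast, mul_one]
  apply Finset.prod_congr rfl
  intro j _
  congr 1
  simp [Fin.castSucc_inj]

lemma prod_cs_erase_univ (k : Fin P) :
    ∏ j ∈ (Finset.univ : Finset (Fin (P+1))).erase k.castSucc, g j
      = (∏ j ∈ Finset.univ.erase k, g j.castSucc) * g (Fin.last P) := by
  rw [← Finset.filter_ne', ← Finset.filter_ne', Finset.prod_filter, Finset.prod_filter,
    Fin.prod_univ_castSucc]
  have hlast : Fin.last P ≠ k.castSucc := (Fin.castSucc_lt_last k).ne'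
  rw [if_pos hlast]
  congr 1
  apply Finset.prod_congr rfl
  intro j _
  congr 1
  simp [Fin.castSucc_inj]
end reindex

lemma hcoef_snoc {P : ℕ} (α β : Fin P → ℂ) (c : ℂ) (k : Fin P) (N : ℕ)
    (he : poch (1 - c + α k) N ≠ 0) :
    hcoef (Fin.snoc α c) (Fin.snoc β c) k.castSucc N = hcoef α β k N := by
  unfold hcoef
  rw [Fin.prod_univ_castSucc, prod_cs_erase_univ]
  simp only [Fin.snoc_castSucc, Fin.snoc_last]
  rw [show ((∏ j ∈ Finset.univ.erase k, poch (1 - α j + α k) N) * poch (1 - c + α k) N)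
        * (N.factorial : ℂ)
      = ((∏ j ∈ Finset.univ.erase k, poch (1 - α j + α k) N) * (N.factorial : ℂ))
        * poch (1 - c + α k) N by ring]
  exact mul_div_mul_right _ _ he

lemma meijerG_snoc {P : ℕ} (α β : Fin P → ℂ) (c : ℂ) (m' n' : ℕ) (hm' : m' ≤ P) (hn' : n' ≤ P)
    (hpoch : ∀ k : Fin P, (k : ℕ) < m' → ∀ N : ℕ, poch (1 - c + α k) N ≠ 0) (z : ℂ) :
    meijerG (Fin.snoc α c) (Fin.snoc β c) m' n' z
      = ∑ k ∈ Finset.univ.filter (fun k : Fin P => (k : ℕ) < m'),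
          z ^ α k
            * (Gcoef α β m' n' k / (Complex.Gamma (1 - c + α k) * Complex.Gamma (c - α k)))
            * hsum α β k ((-1 : ℂ) ^ (P + 1 - m' - n') * z) := by
  rw [meijerG_eq, sum_cs_filter_lt _ m' hm']
  refine Finset.sum_congr rfl fun k hk => ?_
  have hkm : (k : ℕ) < m' := by simpa using (Finset.mem_filter.1 hk).2
  have hG : Gcoef (Fin.snoc α c) (Fin.snoc β c) m' n' k.castSucc
      = Gcoef α β m' n' k / (Complex.Gamma (1 - c + α k) * Complex.Gamma (c - α k)) := by
    unfold Gcoef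
    rw [prod_cs_erase_filter_lt _ m' hm' k, prod_cs_filter_lt _ n' hn',
      prod_cs_filter_le _ m' hm', prod_cs_filter_le _ n' hn']
    simp only [Fin.snoc_castSucc, Fin.snoc_last]
    rw [div_div]
    congr 1
    ring
  have hh : hsum (Fin.snoc α c) (Fin.snoc β c) k.castSucc ((-1 : ℂ) ^ (P + 1 - m' - n') * z)
      = hsum α β k ((-1 : ℂ) ^ (P + 1 - m' - n') * z) := by
    unfold hsum
    exact tsum_congr fun N => by rw [hcoef_snoc α β c k N (hpoch k hkm N)]
  rw [hG, hh, Fin.snoc_castSucc]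

end aux


open Filter Topology in
/-- Theorem 3.1 of the paper: boundary values of the internal G-function
`𝔊^{m,n}_{p,p}` on the banks of the branch cut `(−1, 0]` (simple-pole case). -/
theorem internal_G_boundary_values_inner_cut {m n : ℕ} (hm : 1 ≤ m) (a b : Fin (m + n) → ℝ)
    (haa : ∀ i j, i ≠ j → ∀ k : ℤ, a i - a j ≠ (k : ℝ))
    (hab : ∀ i j, ∀ k : ℤ, a i - b j ≠ (k : ℝ))
    (ha2 : ∀ k : Fin (m + n), (k : ℕ) < m → ∀ j : ℤ, 2 * a k ≠ (j : ℝ))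
    (x : ℝ) (hx0 : 0 < x) (hx1 : x < 1) :
    ∃ Lp Lm : ℂ,
      Tendsto (fun ε : ℝ =>
          meijerG (fun i => (a i : ℂ)) (fun i => (b i : ℂ)) m n (-(x : ℂ) + (ε : ℂ) * Complex.I))
        (nhdsWithin 0 (Set.Ioi 0)) (nhds Lp) ∧
      Tendsto (fun ε : ℝ =>
          meijerG (fun i => (a i : ℂ)) (fun i => (b i : ℂ)) m n (-(x : ℂ) - (ε : ℂ) * Complex.I))
        (nhdsWithin 0 (Set.Ioi 0)) (nhds Lm) ∧
      Lp.re = Lm.re ∧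
      (Lp.re : ℂ) = -(Real.pi : ℂ) *
        meijerG (Fin.snoc (fun i => (a i : ℂ)) ((3 : ℂ) / 2))
          (Fin.snoc (fun i => (b i : ℂ)) ((3 : ℂ) / 2)) m n (x : ℂ) ∧
      Lp.im = -Lm.im ∧
      (Lp.im : ℂ) = (Real.pi : ℂ) *
        meijerG (Fin.snoc (fun i => (a i : ℂ)) (1 : ℂ))
          (Fin.snoc (fun i => (b i : ℂ)) (1 : ℂ)) m n (x : ℂ) := by
  classical
  set A : Fin (m+n) → ℂ := fun i => (a i : ℂ) with hA
  set B : Fin (m+n) → ℂ := fun i => (b i : ℂ) with hB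
  set S : Finset (Fin (m+n)) := Finset.univ.filter (fun k : Fin (m+n) => (k : ℕ) < m) with hS
  have h0 : (m + n) - m - n = 0 := by omega
  have h1 : (m + n + 1) - m - n = 1 := by omega
  -- the terms of the series
  set gfun : Fin (m+n) → ℂ → ℂ :=
    fun k z => z ^ A k * Gcoef A B m n k * hsum A B k z with hgfun
  have hmeijer : ∀ z : ℂ, meijerG A B m n z = ∑ k ∈ S, gfun k z := by
    intro z
    rw [meijerG_eq]
    simp only [h0, pow_zero, one_mul, hgfun, hS]
  -- basic non-vanishing facts
  have hu : ∀ k j (N : ℕ), (1 - B j + A k) + (N : ℂ) ≠ 0 := by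
    intro k j N h
    apply hab k j (-1 - (N:ℤ))
    have := congrArg Complex.re h
    simp [hA, hB] at this
    push_cast
    linarith
  have hv : ∀ k j, j ≠ k → ∀ N : ℕ, (1 - A j + A k) + (N : ℂ) ≠ 0 := by
    intro k j hj N h
    apply haa k j (fun hh => hj (hh.symm ▸ rfl)) (-1 - (N:ℤ))
    have := congrArg Complex.re h
    simp [hA] at this
    push_cast
    linarith
  -- radius
  set r : ℝ := (1 + x)/2 with hr
  have hr0 : 0 < r := by positivity
  have hrx : x < r := by simp only [hr]; linarith
  have hr1 : r < 1 := by simp only [hr]; linarith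
  have hsummable : ∀ k : Fin (m+n), Summable (fun N : ℕ => ‖hcoef A B k N‖ * r ^ N) := by
    intro k
    exact summable_hyper (fun j => 1 - B j + A k) (fun j => 1 - A j + A k) k
      (hu k) (hv k) hr0 hr1
  have hnormx : ‖-(x:ℂ)‖ = x := by
    simp [abs_of_pos hx0]
  have hcont : ∀ k : Fin (m+n), ContinuousAt (fun z : ℂ => hsum A B k z) (-(x:ℂ)) := by
    intro k
    exact continuousAt_hyperSum (hsummable k) (by rw [hnormx]; exact hrx)
  -- the path
  set φ : ℝ → ℂ := fun ε => -(x:ℂ) + (ε:ℂ) * Complex.I with hφ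
  have hφ0 : Tendsto φ (𝓝[>] (0:ℝ)) (𝓝 (-(x:ℂ))) := by
    have hc : Continuous φ := by
      simp only [hφ]
      continuity
    have := hc.tendsto 0
    simp only [hφ, Complex.ofReal_zero, zero_mul, add_zero] at this
    exact this.mono_left nhdsWithin_le_nhds
  have hφin : Tendsto φ (𝓝[>] (0:ℝ)) (𝓝[{z : ℂ | 0 ≤ z.im}] (-(x:ℂ))) := by
    apply tendsto_nhdsWithin_of_tendsto_nhds_of_eventually_within _ hφ0
    filter_upwards [self_mem_nhdsWithin] with ε hε
    simp only [hφ, Set.mem_setOf_eq, Complex.add_im, Complex.neg_im, Complex.ofReal_im,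
      Complex.mul_im, Complex.I_im, Complex.I_re, Complex.ofReal_re]
    simp
    exact le_of_lt hε
  -- limit from above
  set Lp : ℂ := ∑ k ∈ S, gfun k (-(x:ℂ)) with hLpdef
  have htend_up : Tendsto (fun ε : ℝ => meijerG A B m n (φ ε)) (𝓝[>] (0:ℝ)) (𝓝 Lp) := by
    have : Tendsto (fun ε : ℝ => ∑ k ∈ S, gfun k (φ ε)) (𝓝[>] (0:ℝ)) (𝓝 Lp) := by
      rw [hLpdef]
      apply tendsto_finset_sum
      intro k _
      have hcp : Tendsto (fun ε : ℝ => (φ ε) ^ A k) (𝓝[>] (0:ℝ)) (𝓝 ((-(x:ℂ)) ^ A k)) :=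
        (cwa_cpow x hx0 (A k)).tendsto.comp hφin
      have hhs : Tendsto (fun ε : ℝ => hsum A B k (φ ε)) (𝓝[>] (0:ℝ))
          (𝓝 (hsum A B k (-(x:ℂ)))) := (hcont k).tendsto.comp hφ0
      simpa only [hgfun] using (hcp.mul_const (Gcoef A B m n k)).mul hhs
    exact this.congr fun ε => (hmeijer (φ ε)).symm
  -- conjugation symmetry
  have hconjG : ∀ k, (starRingEnd ℂ) (Gcoef A B m n k) = Gcoef A B m n k := by
    intro k
    simp only [Gcoef, map_div₀, map_mul, map_prod, map_sub, map_add, map_one,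
      ← Complex.Gamma_conj, hA, hB, Complex.conj_ofReal]
  have hconjc : ∀ k N, (starRingEnd ℂ) (hcoef A B k N) = hcoef A B k N := by
    intro k N
    simp only [hcoef, map_div₀, map_mul, map_prod, conj_poch, map_sub, map_add, map_one,
      map_natCast, hA, hB, Complex.conj_ofReal]
  have hconjh : ∀ k (w : ℂ), (starRingEnd ℂ) (hsum A B k w) = hsum A B k ((starRingEnd ℂ) w) := by
    intro k w
    rw [hsum, conj_tsum']
    apply tsum_congr
    intro N
    rw [map_mul, map_pow, hconjc]
  have hconjgfun : ∀ k (w : ℂ), w.arg ≠ Real.pi →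
      (starRingEnd ℂ) (gfun k w) = gfun k ((starRingEnd ℂ) w) := by
    intro k w hw
    simp only [hgfun, map_mul, hconjG, hconjh]
    congr 2
    have := Complex.conj_cpow w (A k) hw
    rw [show (starRingEnd ℂ) (A k) = A k by simp [hA, Complex.conj_ofReal]] at this
    rw [← this]
  set Lm : ℂ := (starRingEnd ℂ) Lp with hLmdef
  have htend_dn : Tendsto (fun ε : ℝ => meijerG A B m n (-(x:ℂ) - (ε:ℂ) * Complex.I))
      (𝓝[>] (0:ℝ)) (𝓝 Lm) := by
    have hconj_meijer : ∀ ε : ℝ, 0 < ε →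
        meijerG A B m n (-(x:ℂ) - (ε:ℂ) * Complex.I)
          = (starRingEnd ℂ) (meijerG A B m n (φ ε)) := by
      intro ε hε
      have hargφ : (φ ε).arg ≠ Real.pi := by
        intro h
        have := (Complex.arg_eq_pi_iff.1 h).2
        simp only [hφ, Complex.add_im, Complex.neg_im, Complex.ofReal_im, Complex.mul_im,
          Complex.I_im, Complex.I_re, Complex.ofReal_re] at this
        simp at this
        exact hε.ne' this
      have hcφ : (starRingEnd ℂ) (φ ε) = -(x:ℂ) - (ε:ℂ) * Complex.I := by
        simp [hφ, map_add, map_mul, Complex.conj_ofReal, Complex.conj_I]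
        ring
      rw [hmeijer, hmeijer, map_sum]
      refine Finset.sum_congr rfl fun k _ => ?_
      rw [hconjgfun k (φ ε) hargφ, hcφ]
    have hc : Tendsto (fun ε : ℝ => (starRingEnd ℂ) (meijerG A B m n (φ ε)))
        (𝓝[>] (0:ℝ)) (𝓝 ((starRingEnd ℂ) Lp)) :=
      (Complex.continuous_conj.tendsto Lp).comp htend_up
    rw [hLmdef]
    apply hc.congr'
    filter_upwards [self_mem_nhdsWithin] with ε hε
    exact (hconj_meijer ε hε).symm
  -- realness of the coefficient times series at -x
  have hRreal : ∀ k, (starRingEnd ℂ) (Gcoef A B m n k * hsum A B k (-(x:ℂ)))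
      = Gcoef A B m n k * hsum A B k (-(x:ℂ)) := by
    intro k
    rw [map_mul, hconjG, hconjh]
    congr 2
    simp [Complex.conj_ofReal]
  set rr : Fin (m+n) → ℝ := fun k => (Gcoef A B m n k * hsum A B k (-(x:ℂ))).re with hrr
  have hRk : ∀ k, Gcoef A B m n k * hsum A B k (-(x:ℂ)) = ((rr k : ℝ) : ℂ) := by
    intro k
    rw [hrr]
    exact (Complex.conj_eq_iff_re.1 (hRreal k)).symm
  set c1 : Fin (m+n) → ℝ := fun k => x ^ (a k) * Real.cos (Real.pi * a k) * rr k with hc1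
  set c2 : Fin (m+n) → ℝ := fun k => x ^ (a k) * Real.sin (Real.pi * a k) * rr k with hc2
  have hgval : ∀ k, gfun k (-(x:ℂ)) = ((c1 k : ℝ) : ℂ) + ((c2 k : ℝ) : ℂ) * Complex.I := by
    intro k
    rw [hgfun]
    show (-(x:ℂ)) ^ A k * Gcoef A B m n k * hsum A B k (-(x:ℂ)) = _
    rw [mul_assoc, hRk k, hA]
    show (-(x:ℂ)) ^ ((a k : ℝ) : ℂ) * _ = _
    rw [neg_cpow_real x hx0 (a k), hc1, hc2]
    push_cast
    ring
  have hLpre : Lp.re = ∑ k ∈ S, c1 k := by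
    rw [hLpdef, Complex.re_sum]
    refine Finset.sum_congr rfl fun k _ => ?_
    rw [hgval k]
    simp
  have hLpim : Lp.im = ∑ k ∈ S, c2 k := by
    rw [hLpdef, Complex.im_sum]
    refine Finset.sum_congr rfl fun k _ => ?_
    rw [hgval k]
    simp
  -- the two snoc meijerG evaluations
  have hπ : ((Real.pi : ℝ) : ℂ) ≠ 0 := Complex.ofReal_ne_zero.2 Real.pi_ne_zero
  have hpoch32 : ∀ k : Fin (m+n), (k : ℕ) < m → ∀ N : ℕ, poch (1 - (3:ℂ)/2 + A k) N ≠ 0 := by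
    intro k hk N
    apply poch_ne_zero
    intro i h
    apply ha2 k hk (1 - 2*(i:ℤ))
    have := congrArg Complex.re h
    simp [hA] at this
    push_cast
    linarith
  have hpoch1 : ∀ k : Fin (m+n), (k : ℕ) < m → ∀ N : ℕ, poch (1 - (1:ℂ) + A k) N ≠ 0 := by
    intro k hk N
    apply poch_ne_zero
    intro i h
    apply ha2 k hk (-2*(i:ℤ))
    have := congrArg Complex.re h
    simp [hA] at this
    push_cast
    linarith
  have hmn : m ≤ m + n := Nat.le_add_right m n
  have hnn : n ≤ m + n := Nat.le_add_left n m
  -- real part identity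
  have hre_eq : ((Lp.re : ℝ) : ℂ) = -(Real.pi : ℂ) *
      meijerG (Fin.snoc A ((3:ℂ)/2)) (Fin.snoc B ((3:ℂ)/2)) m n (x:ℂ) := by
    rw [meijerG_snoc A B ((3:ℂ)/2) m n hmn hnn hpoch32 (x:ℂ), hLpre]
    rw [Finset.mul_sum]
    rw [Complex.ofReal_sum]
    refine Finset.sum_congr rfl fun k hk => ?_
    have hrefl : Complex.Gamma (1 - (3:ℂ)/2 + A k) * Complex.Gamma ((3:ℂ)/2 - A k)
        = (Real.pi : ℂ) / (-Complex.cos ((Real.pi : ℂ) * A k)) := by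
      rw [show (1:ℂ) - 3/2 + A k = A k - 1/2 by ring,
        show (3:ℂ)/2 - A k = 1 - (A k - 1/2) by ring,
        Complex.Gamma_mul_Gamma_one_sub]
      rw [show (Real.pi : ℂ) * (A k - 1/2) = (Real.pi : ℂ) * A k - (Real.pi : ℂ)/2 by ring,
        Complex.sin_sub_pi_div_two]
    have harg : ((-1:ℂ)) ^ (m + n + 1 - m - n) * (x:ℂ) = -(x:ℂ) := by
      rw [h1, pow_one]; ring
    rw [harg, hrefl]
    have hcos : Complex.cos ((Real.pi : ℂ) * A k) = ((Real.cos (Real.pi * a k) : ℝ) : ℂ) := by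
      rw [hA]
      show Complex.cos ((Real.pi : ℂ) * ((a k : ℝ) : ℂ)) = _
      rw [← Complex.ofReal_mul, Complex.ofReal_cos]
    have hxpow : ((x:ℂ)) ^ A k = (((x ^ (a k) : ℝ)) : ℂ) := by
      rw [hA]
      exact (Complex.ofReal_cpow hx0.le (a k)).symm
    rw [hxpow, hcos]
    rw [mul_assoc (((x ^ a k : ℝ) : ℂ)) _ (hsum A B k (-(x:ℂ)))]
    rw [show Gcoef A B m n k / ((Real.pi:ℂ) / -((Real.cos (Real.pi * a k) : ℝ) : ℂ))
          * hsum A B k (-(x:ℂ))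
        = (Gcoef A B m n k * hsum A B k (-(x:ℂ))) * (-((Real.cos (Real.pi * a k) : ℝ) : ℂ))
            / (Real.pi : ℂ) by rw [div_div_eq_mul_div]; ring, hRk k]
    simp only [hc1]
    push_cast
    field_simp
  -- imaginary part identity
  have him_eq : ((Lp.im : ℝ) : ℂ) = (Real.pi : ℂ) *
      meijerG (Fin.snoc A (1:ℂ)) (Fin.snoc B (1:ℂ)) m n (x:ℂ) := by
    rw [meijerG_snoc A B (1:ℂ) m n hmn hnn hpoch1 (x:ℂ), hLpim]
    rw [Finset.mul_sum]
    rw [Complex.ofReal_sum]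
    refine Finset.sum_congr rfl fun k hk => ?_
    have hrefl : Complex.Gamma (1 - (1:ℂ) + A k) * Complex.Gamma ((1:ℂ) - A k)
        = (Real.pi : ℂ) / Complex.sin ((Real.pi : ℂ) * A k) := by
      rw [show (1:ℂ) - 1 + A k = A k by ring, Complex.Gamma_mul_Gamma_one_sub]
    have harg : ((-1:ℂ)) ^ (m + n + 1 - m - n) * (x:ℂ) = -(x:ℂ) := by
      rw [h1, pow_one]; ring
    rw [harg, hrefl]
    have hsin : Complex.sin ((Real.pi : ℂ) * A k) = ((Real.sin (Real.pi * a k) : ℝ) : ℂ) := by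
      rw [hA]
      show Complex.sin ((Real.pi : ℂ) * ((a k : ℝ) : ℂ)) = _
      rw [← Complex.ofReal_mul, Complex.ofReal_sin]
    have hxpow : ((x:ℂ)) ^ A k = (((x ^ (a k) : ℝ)) : ℂ) := by
      rw [hA]
      exact (Complex.ofReal_cpow hx0.le (a k)).symm
    rw [hxpow, hsin]
    rw [mul_assoc (((x ^ a k : ℝ) : ℂ)) _ (hsum A B k (-(x:ℂ)))]
    rw [show Gcoef A B m n k / ((Real.pi:ℂ) / ((Real.sin (Real.pi * a k) : ℝ) : ℂ))
          * hsum A B k (-(x:ℂ))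
        = (Gcoef A B m n k * hsum A B k (-(x:ℂ))) * (((Real.sin (Real.pi * a k) : ℝ) : ℂ))
            / (Real.pi : ℂ) by rw [div_div_eq_mul_div]; ring, hRk k]
    simp only [hc2]
    push_cast
    field_simp
  refine ⟨Lp, Lm, htend_up, htend_dn, ?_, hre_eq, ?_, him_eq⟩
  · rw [hLmdef, Complex.conj_re]
  · rw [hLmdef, Complex.conj_im]; ring
end
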